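/- For every integer n ≥ 2, J_n(0) = (n/(n-1)) · J_{n-1}(1) provided n ≥ 3, i.e., the central value recursion holds. -/
import Mathlib

open Finset fwdDiff

-- fwdDiff of a monomial is a combination of lower monomials
lemma fwdDiff_pow_aux (h : ℝ) (k : ℕ) :
    Δ_[h] (fun x : ℝ => x ^ k) =
      ∑ j ∈ Finset.range k, ((k.choose j : ℝ) * h ^ (k - j)) • (fun x : ℝ => x ^ j) := by
  funext x
  simp only [fwdDiff, Finset.sum_apply, Pi.smul_apply, smul_eq_mul]
  rw [add_pow, Finset.sum_range_succ]
  simp only [Nat.choose_self, Nat.sub_self, pow_zero, Nat.cast_one, mul_one]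
  rw [add_sub_cancel_right]
  exact Finset.sum_congr rfl fun j _ => by ring

lemma fwdDiff_iter_pow_eq_zero (h : ℝ) (k : ℕ) :
    ∀ n : ℕ, k < n → (Δ_[h])^[n] (fun x : ℝ => x ^ k) = 0 := by
  induction k using Nat.strong_induction_on with
  | _ k IH =>
    rintro (_ | m) hn
    · omega
    rw [Function.iterate_succ_apply, fwdDiff_pow_aux, fwdDiff_iter_finset_sum]
    refine Finset.sum_eq_zero fun j hj => ?_
    have hj' := Finset.mem_range.1 hj
    rw [fwdDiff_iter_const_smul, IH j hj' m (by omega), smul_zero]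

lemma full_sum_zero (n : ℕ) (hn : 3 ≤ n) :
    ∑ i ∈ Finset.range (n + 1),
      (-1 : ℝ) ^ i * (n.choose i) * ((n : ℝ) - 2 * i) ^ (n - 2) = 0 := by
  have H := fwdDiff_iter_eq_sum_shift (-2 : ℝ) (fun x : ℝ => x ^ (n - 2)) n (n : ℝ)
  rw [fwdDiff_iter_pow_eq_zero (-2 : ℝ) (n - 2) n (by omega)] at H
  simp only [Pi.zero_apply, zsmul_eq_mul, Int.cast_mul, Int.cast_pow, Int.cast_neg,
    Int.cast_one, Int.cast_natCast, nsmul_eq_mul, smul_eq_mul] at H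
  have H2 : (0 : ℝ) = ∑ k ∈ Finset.range (n + 1),
      (-1 : ℝ) ^ (n - k) * (n.choose k) * ((n : ℝ) - 2 * k) ^ (n - 2) := by
    rw [H]
    refine Finset.sum_congr rfl fun k hk => ?_
    ring_nf
  have H3 := congrArg (fun x => (-1 : ℝ) ^ n * x) H2
  simp only [mul_zero, Finset.mul_sum] at H3
  rw [H3]
  refine Finset.sum_congr rfl fun k hk => ?_
  have hk' : k ≤ n := by have := Finset.mem_range.1 hk; omega
  have e1 : (-1 : ℝ) ^ (n - k) * (-1 : ℝ) ^ k = (-1) ^ n := by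
    rw [← pow_add, Nat.sub_add_cancel hk']
  have e2 : (-1 : ℝ) ^ k * (-1 : ℝ) ^ k = 1 := by
    rw [← pow_add, ← two_mul, pow_mul]; norm_num
  have : (-1 : ℝ) ^ n * (-1 : ℝ) ^ (n - k) = (-1) ^ k := by
    have e3 : (-1 : ℝ) ^ (n - k) * (-1 : ℝ) ^ (n - k) = 1 := by
      rw [← pow_add, ← two_mul, pow_mul]; norm_num
    rw [← e1]; linear_combination ((-1 : ℝ) ^ k) * e3
  calc (-1 : ℝ) ^ k * (n.choose k) * ((n : ℝ) - 2 * k) ^ (n - 2)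
      = ((-1 : ℝ) ^ n * (-1 : ℝ) ^ (n - k)) * (n.choose k) * ((n : ℝ) - 2 * k) ^ (n - 2) := by
        rw [this]
    _ = (-1 : ℝ) ^ n * ((-1 : ℝ) ^ (n - k) * (n.choose k) * ((n : ℝ) - 2 * k) ^ (n - 2)) := by
        ring

lemma term_symm (n : ℕ) (hn : 3 ≤ n) (i : ℕ) (hi : i ≤ n) :
    (-1 : ℝ) ^ (n - i) * (n.choose (n - i)) * ((n : ℝ) - 2 * (n - i : ℕ)) ^ (n - 2)
      = (-1 : ℝ) ^ i * (n.choose i) * ((n : ℝ) - 2 * i) ^ (n - 2) := by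
  rw [Nat.choose_symm hi, Nat.cast_sub hi]
  have e0 : ((n : ℝ) - 2 * ((n : ℝ) - i)) ^ (n - 2)
      = (-1 : ℝ) ^ (n - 2) * ((n : ℝ) - 2 * i) ^ (n - 2) := by
    rw [show ((n : ℝ) - 2 * ((n : ℝ) - i)) = -((n : ℝ) - 2 * i) by ring]
    exact neg_pow _ _
  rw [e0]
  have e1 : (-1 : ℝ) ^ (n - i) * (-1 : ℝ) ^ i = (-1) ^ n := by
    rw [← pow_add, Nat.sub_add_cancel hi]
  have e2 : (-1 : ℝ) ^ (n - 2) = (-1) ^ n := by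
    have : (-1 : ℝ) ^ (n - 2) * (-1 : ℝ) ^ 2 = (-1) ^ n := by
      rw [← pow_add, Nat.sub_add_cancel (by omega : 2 ≤ n)]
    simpa using this
  have e3 : (-1 : ℝ) ^ i * (-1 : ℝ) ^ i = 1 := by
    rw [← pow_add, ← two_mul, pow_mul]; norm_num
  have e5 : (-1 : ℝ) ^ (n - i) * (-1 : ℝ) ^ (n - i) = 1 := by
    rw [← pow_add, ← two_mul, pow_mul]; norm_num
  have key : (-1 : ℝ) ^ (n - i) * (-1 : ℝ) ^ (n - 2) = (-1) ^ i := by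
    linear_combination ((-1 : ℝ) ^ (n - i)) * e2 + ((-1 : ℝ) ^ i) * e5
      - ((-1 : ℝ) ^ (n - i)) * e1
  calc (-1 : ℝ) ^ (n - i) * (n.choose i) * ((-1 : ℝ) ^ (n - 2) * ((n : ℝ) - 2 * i) ^ (n - 2))
      = ((-1 : ℝ) ^ (n - i) * (-1 : ℝ) ^ (n - 2)) * (n.choose i) * ((n : ℝ) - 2 * i) ^ (n - 2) := by
        ring
    _ = (-1 : ℝ) ^ i * (n.choose i) * ((n : ℝ) - 2 * i) ^ (n - 2) := by rw [key]

lemma half_sum_zero (n : ℕ) (hn : 3 ≤ n) :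
    ∑ i ∈ Finset.range (n / 2 + 1),
      (-1 : ℝ) ^ i * (n.choose i) * ((n : ℝ) - 2 * i) ^ (n - 2) = 0 := by
  set t : ℕ → ℝ := fun i => (-1 : ℝ) ^ i * (n.choose i) * ((n : ℝ) - 2 * i) ^ (n - 2) with ht
  have hsplit : (∑ i ∈ Finset.range (n / 2 + 1), t i)
      + ∑ i ∈ Finset.Ico (n / 2 + 1) (n + 1), t i = ∑ i ∈ Finset.range (n + 1), t i :=
    Finset.sum_range_add_sum_Ico t (by omega)
  have htail : ∑ i ∈ Finset.Ico (n / 2 + 1) (n + 1), t i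
      = ∑ j ∈ Finset.range (n - n / 2), t j := by
    rw [Finset.sum_Ico_eq_sum_range]
    rw [show n + 1 - (n / 2 + 1) = n - n / 2 by omega]
    rw [← Finset.sum_range_reflect (fun j => t j) (n - n / 2)]
    refine Finset.sum_congr rfl fun j hj => ?_
    have hj' := Finset.mem_range.1 hj
    rw [show n - n / 2 - 1 - j = n - (n / 2 + 1 + j) by omega]
    exact (term_symm n hn (n / 2 + 1 + j) (by omega)).symm
  have htail2 : ∑ j ∈ Finset.range (n - n / 2), t j = ∑ i ∈ Finset.range (n / 2 + 1), t i := by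
    rcases Nat.even_or_odd n with ⟨c, rfl⟩ | ⟨c, rfl⟩
    · have h1 : c + c - (c + c) / 2 = (c + c) / 2 := by omega
      have h3 : (((c + c : ℕ)) : ℝ) - 2 * (((c + c) / 2 : ℕ) : ℝ) = 0 := by
        rw [show (c + c) / 2 = c by omega]; push_cast; ring
      have h2 : t ((c + c) / 2) = 0 := by
        show (-1 : ℝ) ^ ((c + c) / 2) * ((c + c).choose ((c + c) / 2))
          * (((c + c : ℕ) : ℝ) - 2 * (((c + c) / 2 : ℕ) : ℝ)) ^ (c + c - 2) = 0
        rw [h3, zero_pow (by omega : c + c - 2 ≠ 0), mul_zero]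
      rw [h1, Finset.sum_range_succ, h2, add_zero]
    · rw [show 2 * c + 1 - (2 * c + 1) / 2 = (2 * c + 1) / 2 + 1 by omega]
  have hfull : ∑ i ∈ Finset.range (n + 1), t i = 0 := full_sum_zero n hn
  linarith [hsplit, htail, htail2, hfull]

lemma key_recursion (n : ℕ) (hn : 3 ≤ n) :
    ∑ i ∈ Finset.range (n / 2 + 1), (-1 : ℝ) ^ i * (n.choose i) * ((n : ℝ) - 2 * i) ^ (n - 1)
      = 2 * n * ∑ i ∈ Finset.range (n / 2 + 1),
          (-1 : ℝ) ^ i * ((n - 1).choose i) * ((n : ℝ) - 2 * i) ^ (n - 2) := by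
  have hterm : ∀ i ∈ Finset.range (n / 2 + 1),
      (-1 : ℝ) ^ i * (n.choose i) * ((n : ℝ) - 2 * i) ^ (n - 1)
        = 2 * n * ((-1 : ℝ) ^ i * ((n - 1).choose i) * ((n : ℝ) - 2 * i) ^ (n - 2))
          - n * ((-1 : ℝ) ^ i * (n.choose i) * ((n : ℝ) - 2 * i) ^ (n - 2)) := by
    intro i hi
    have hi' : i ≤ n := by have := Finset.mem_range.1 hi; omega
    have hc : ((n - 1).choose i : ℝ) * n = (n.choose i : ℝ) * ((n : ℝ) - i) := by
      have h := Nat.choose_mul_succ_eq (n - 1) i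
      rw [show n - 1 + 1 = n by omega] at h
      have h2 := congrArg (Nat.cast : ℕ → ℝ) h
      push_cast [Nat.cast_sub hi'] at h2
      exact h2
    have hp : ((n : ℝ) - 2 * i) ^ (n - 1) = ((n : ℝ) - 2 * i) ^ (n - 2) * ((n : ℝ) - 2 * i) := by
      rw [← pow_succ, show n - 2 + 1 = n - 1 by omega]
    rw [hp]
    linear_combination (-2 * (-1 : ℝ) ^ i * ((n : ℝ) - 2 * i) ^ (n - 2)) * hc
  rw [Finset.sum_congr rfl hterm, Finset.sum_sub_distrib, ← Finset.mul_sum, ← Finset.mul_sum,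
    half_sum_zero n hn, mul_zero, sub_zero]

lemma sum_Icc_int (N : ℕ) (f : ℤ → ℝ) :
    ∑ i ∈ Finset.Icc (0 : ℤ) (N : ℤ), f i = ∑ k ∈ Finset.range (N + 1), f k := by
  induction N with
  | zero => simp
  | succ m ih =>
      have harg : ((m + 1 : ℕ) : ℤ) = (m : ℤ) + 1 := by push_cast; ring
      have hins : Finset.Icc (0 : ℤ) ((m : ℤ) + 1)
          = insert ((m : ℤ) + 1) (Finset.Icc (0 : ℤ) (m : ℤ)) := by
        ext x; simp only [Finset.mem_Icc, Finset.mem_insert]; omega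
      rw [harg, hins, Finset.sum_insert (by simp), ih,
        Finset.sum_range_succ (fun k : ℕ => f k) (m + 1), harg]
      ring

lemma floor_half (n : ℕ) : ⌊(n : ℝ) / 2⌋ = ((n / 2 : ℕ) : ℤ) := by
  have h1 : n / 2 * 2 ≤ n := by omega
  have h2 : n < (n / 2 + 1) * 2 := by omega
  rw [Int.floor_eq_iff]
  constructor
  · rw [Int.cast_natCast, le_div_iff₀ (by norm_num)]
    exact_mod_cast h1
  · rw [Int.cast_natCast, div_lt_iff₀ (by norm_num)]
    exact_mod_cast h2

/-- The Laplace–Pólya values, via Laplace's explicit finite-sum formula. -/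
noncomputable def J (n : ℕ) (r : ℝ) : ℝ :=
  (1 / (2 ^ (n - 1) * (Nat.factorial (n - 1)))) *
    ∑ i ∈ Finset.Icc (0 : ℤ) ⌊((n : ℝ) + r) / 2⌋,
      (-1 : ℝ) ^ i * (n.choose i.toNat) * ((n : ℝ) + r - 2 * (i : ℝ)) ^ (n - 1)

theorem J_central_recursion (n : ℕ) (hn : 3 ≤ n) :
    J n 0 = ((n : ℝ) / ((n : ℝ) - 1)) * J (n - 1) 1 := by
  have hn1 : ((n - 1 : ℕ) : ℝ) = (n : ℝ) - 1 := by
    rw [Nat.cast_sub (by omega : 1 ≤ n)]; norm_num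
  have hfloor0 : ⌊((n : ℝ) + 0) / 2⌋ = ((n / 2 : ℕ) : ℤ) := by
    rw [add_zero]; exact floor_half n
  have hfloor1 : ⌊(((n - 1 : ℕ) : ℝ) + 1) / 2⌋ = ((n / 2 : ℕ) : ℤ) := by
    rw [hn1, show (n : ℝ) - 1 + 1 = (n : ℝ) by ring]; exact floor_half n
  unfold J
  rw [hfloor0, hfloor1, sum_Icc_int, sum_Icc_int]
  have hb1 : ∀ k ∈ Finset.range (n / 2 + 1),
      (-1 : ℝ) ^ ((k : ℕ) : ℤ) * (n.choose ((k : ℕ) : ℤ).toNat)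
          * ((n : ℝ) + 0 - 2 * (((k : ℕ) : ℤ) : ℝ)) ^ (n - 1)
        = (-1 : ℝ) ^ k * (n.choose k) * ((n : ℝ) - 2 * k) ^ (n - 1) := by
    intro k _
    rw [zpow_natCast, Int.toNat_natCast]
    norm_num
  have hb2 : ∀ k ∈ Finset.range (n / 2 + 1),
      (-1 : ℝ) ^ ((k : ℕ) : ℤ) * ((n - 1).choose ((k : ℕ) : ℤ).toNat)
          * (((n - 1 : ℕ) : ℝ) + 1 - 2 * (((k : ℕ) : ℤ) : ℝ)) ^ (n - 1 - 1)
        = (-1 : ℝ) ^ k * ((n - 1).choose k) * ((n : ℝ) - 2 * k) ^ (n - 2) := by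
    intro k _
    rw [zpow_natCast, Int.toNat_natCast, hn1,
      show (n : ℝ) - 1 + 1 - 2 * (((k : ℕ) : ℤ) : ℝ) = (n : ℝ) - 2 * k by push_cast; ring,
      show n - 1 - 1 = n - 2 by omega]
  rw [Finset.sum_congr rfl hb1, Finset.sum_congr rfl hb2, key_recursion n hn]
  -- now a pure constants computation
  obtain ⟨m, rfl⟩ : ∃ m, n = m + 3 := ⟨n - 3, by omega⟩
  simp only [show m + 3 - 1 = m + 2 by omega, show m + 2 - 1 = m + 1 by omega,
    show m + 3 - 2 = m + 1 by omega]
  rw [Nat.factorial_succ (m + 1)]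
  have h2 : (2 : ℝ) ^ (m + 2) = 2 * 2 ^ (m + 1) := by ring
  have hfac : ((m + 1).factorial : ℝ) ≠ 0 := by positivity
  have hpow : (2 : ℝ) ^ (m + 1) ≠ 0 := by positivity
  have hm2 : ((m : ℝ) + 2) ≠ 0 := by positivity
  have hden : ((m + 3 : ℕ) : ℝ) - 1 = (m : ℝ) + 2 := by push_cast; ring
  rw [hden, h2]
  push_cast
  field_simp
  ring
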